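/- Let A be a finite dimensional k-algebra, T = T(A,α) a Hochschild extension, and φ : T → T* a T-bimodule isomorphism with φ(1_T) = (h,c). Then c is an invertible element of A. -/

import Mathlib

namespace HochschildExtension

variable (k : Type*) [Field k] (A : Type*) [Ring A] [Algebra k A]

/-- The underlying vector space `A ⊕ A*` of the Hochschild extension `T(A,α)`. -/
abbrev Ext : Type _ := A × Module.Dual k A

/-- The Hochschild 2-cocycle condition for `α : A ⊗ A → A*`, written pointwise using the
dual bimodule structure `(c·f·a)(b) = f(abc)`, i.e. `(a·g)(x) = g(xa)`, `(f·b)(x) = f(bx)`. -/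
def IsCocycle (α : A →ₗ[k] A →ₗ[k] Module.Dual k A) : Prop :=
  ∀ a b d x : A, α b d (x * a) - α (a * b) d x + α a (b * d) x - α a b (d * x) = 0

/-- The multiplication of the Hochschild extension `T(A,α)`:
`(a,f)(b,g) = (ab, a·g + f·b + α(a⊗b))`, where `(a·g)(x) = g(xa)` and `(f·b)(x) = f(bx)`. -/
noncomputable def hmul (α : A →ₗ[k] A →ₗ[k] Module.Dual k A) (p q : Ext k A) : Ext k A :=
  (p.1 * q.1,
    q.2 ∘ₗ LinearMap.mulRight k p.1 + p.2 ∘ₗ LinearMap.mulLeft k q.1 + α p.1 q.1)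

/-- The identity element `(1, -α(1⊗1))` of the Hochschild extension `T(A,α)`. -/
noncomputable def hone (α : A →ₗ[k] A →ₗ[k] Module.Dual k A) : Ext k A :=
  (1, -(α 1 1))

/-- `T(A,α)` is a symmetric algebra: there is a `k`-linear bijection
`φ : T(A,α) → T(A,α)*` which is a morphism of `T(A,α)`-bimodules, where `T(A,α)*`
carries the canonical bimodule structure `(t·ξ·s)(u) = ξ(sut)`. -/
noncomputable def IsSymmetric (α : A →ₗ[k] A →ₗ[k] Module.Dual k A) : Prop :=
  ∃ φ : Ext k A ≃ₗ[k] Module.Dual k (Ext k A),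
    ∀ x y u : Ext k A,
      φ (hmul k A α x y) u = φ x (hmul k A α y u) ∧
      φ (hmul k A α y x) u = φ x (hmul k A α u y)

/-- **Claim 3.** If `φ : T → T*` is a `T`-bimodule isomorphism with
`φ(1_T) = (h,c)`, then `c` is an invertible element of `A`. -/
theorem claim_three
    (k : Type*) [Field k] (A : Type*) [Ring A] [Algebra k A] [FiniteDimensional k A]
    (α : A →ₗ[k] A →ₗ[k] Module.Dual k A) (hα : IsCocycle k A α)
    (φ : Ext k A ≃ₗ[k] Module.Dual k (Ext k A))
    (hφ : ∀ x y u : Ext k A,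
      φ (hmul k A α x y) u = φ x (hmul k A α y u) ∧
      φ (hmul k A α y x) u = φ x (hmul k A α u y))
    (h : Module.Dual k A) (c : A)
    (hφ1 : ∀ (b : A) (g : Module.Dual k A), φ (hone k A α) (b, g) = h b + g c) :
    IsUnit c := by
  -- (1,-α11) * (0,f) = (0,f)
  have hid1 : ∀ f : Module.Dual k A, hmul k A α (hone k A α) (0, f) = (0, f) := by
    intro f
    simp only [hmul, hone]
    refine Prod.ext (by simp) ?_
    ext x
    simp
  have hid2 : ∀ f : Module.Dual k A, hmul k A α (0, f) (hone k A α) = (0, f) := by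
    intro f
    simp only [hmul, hone]
    refine Prod.ext (by simp) ?_
    ext x
    simp
  -- φ (0,f) (b,g) = f (b*c)
  have key1 : ∀ (f : Module.Dual k A) (b : A) (g : Module.Dual k A),
      φ (0, f) (b, g) = f (b * c) := by
    intro f b g
    have := (hφ (hone k A α) (0, f) (b, g)).1
    rw [hid1] at this
    rw [this]
    have hm : hmul k A α (0, f) (b, g) = (0, f ∘ₗ LinearMap.mulLeft k b) := by
      simp only [hmul]
      refine Prod.ext (by simp) ?_
      ext x
      simp
    rw [hm, hφ1]
    simp
  -- φ (0,f) (b,g) = f (c*b)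
  have key2 : ∀ (f : Module.Dual k A) (b : A) (g : Module.Dual k A),
      φ (0, f) (b, g) = f (c * b) := by
    intro f b g
    have := (hφ (hone k A α) (0, f) (b, g)).2
    rw [hid2] at this
    rw [this]
    have hm : hmul k A α (b, g) (0, f) = (0, f ∘ₗ LinearMap.mulRight k b) := by
      simp only [hmul]
      refine Prod.ext (by simp) ?_
      ext x
      simp
    rw [hm, hφ1]
    simp
  -- the map b ↦ b * c is surjective
  have hsurj : ∀ (L : A →ₗ[k] A),
      (∀ (f : Module.Dual k A) (b g), φ (0, f) (b, g) = f (L b)) →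
      Function.Surjective L := by
    intro L hL
    rw [← LinearMap.range_eq_top]
    by_contra hne
    obtain ⟨f, hf0, hfb⟩ :=
      Submodule.exists_dual_map_eq_bot_of_lt_top (lt_top_iff_ne_top.mpr hne)
        inferInstance
    have hfz : ∀ b, f (L b) = 0 := by
      intro b
      have : f (L b) ∈ Submodule.map f (LinearMap.range L) :=
        Submodule.mem_map_of_mem (LinearMap.mem_range_self L b)
      rw [hfb] at this
      simpa using this
    have : φ (0, f) = 0 := by
      apply LinearMap.ext
      rintro ⟨b, g⟩
      rw [hL f b g, hfz]
      rfl
    have h0 : ((0, f) : Ext k A) = 0 := by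
      have := φ.injective (a₁ := (0, f)) (a₂ := 0) (by simpa using this)
      exact this
    exact hf0 (congrArg Prod.snd h0)
  have hsurjR : Function.Surjective (LinearMap.mulRight k c) := by
    apply hsurj
    intro f b g
    simpa using key1 f b g
  have hsurjL : Function.Surjective (LinearMap.mulLeft k c) := by
    apply hsurj
    intro f b g
    simpa using key2 f b g
  obtain ⟨b, hb⟩ := hsurjR 1
  obtain ⟨d, hd⟩ := hsurjL 1
  simp only [LinearMap.mulRight_apply] at hb
  simp only [LinearMap.mulLeft_apply] at hd
  have hbd : b = d := by
    calc b = b * (c * d) := by rw [hd, mul_one]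
    _ = (b * c) * d := by rw [mul_assoc]
    _ = d := by rw [hb, one_mul]
  exact ⟨⟨c, b, by rw [hbd]; exact hd, hb⟩, rfl⟩


end HochschildExtension
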